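/- For any permutation w ∈ S_n and any index i, if w(i) > w(i+1) then ∂_i(𝔖_w) = 𝔖_{ws_i}, and if w(i) < w(i+1) then ∂_i(𝔖_w) = 0. -/

import Mathlib

open MvPolynomial Classical

/-- The divided difference operator ∂ on ℤ[x_1,...,x_n] for the pair of variables
x_i, x_j (intended: j = i+1): ∂(f) = (f - s_{ij}·f)/(x_i - x_j), defined via choice
from the (always valid) divisibility of f - s_{ij}·f by x_i - x_j. -/
noncomputable def ddiff (n : ℕ) (i j : Fin n) (f : MvPolynomial (Fin n) ℤ) :
    MvPolynomial (Fin n) ℤ :=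
  if h : (X i - X j : MvPolynomial (Fin n) ℤ) ∣ (f - rename (Equiv.swap i j) f) then
    h.choose
  else 0

/-- The isobaric divided difference π_i(f) = ∂_i((1 - x_{i+1})f). -/
noncomputable def isobaric (n : ℕ) (i j : Fin n) (f : MvPolynomial (Fin n) ℤ) :
    MvPolynomial (Fin n) ℤ :=
  ddiff n i j ((1 - X j) * f)

/-- `IsSchubert n w f` holds iff f is the Schubert polynomial 𝔖_w:
𝔖_{w_0} = x_1^{n-1}x_2^{n-2}···x_{n-1} for the longest element w_0, and
𝔖_w = ∂_i(𝔖_{w s_i}) whenever w(i) < w(i+1). -/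
inductive IsSchubert (n : ℕ) : Equiv.Perm (Fin n) → MvPolynomial (Fin n) ℤ → Prop where
  | w0 : IsSchubert n (Fin.revPerm) (∏ i : Fin n, X i ^ (n - 1 - (i : ℕ)))
  | step (w : Equiv.Perm (Fin n)) (i j : Fin n) (hij : (i : ℕ) + 1 = (j : ℕ))
      (hasc : w i < w j) (f : MvPolynomial (Fin n) ℤ)
      (hf : IsSchubert n (w * Equiv.swap i j) f) :
      IsSchubert n w (ddiff n i j f)

/-- `IsGroth n w f` holds iff f is the Grothendieck polynomial 𝔊_w:
𝔊_{w_0} = x_1^{n-1}x_2^{n-2}···x_{n-1}, and 𝔊_w = π_i(𝔊_{w s_i}) whenever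
w(i) < w(i+1), where π_i(f) = ∂_i((1-x_{i+1})f). -/
inductive IsGroth (n : ℕ) : Equiv.Perm (Fin n) → MvPolynomial (Fin n) ℤ → Prop where
  | w0 : IsGroth n (Fin.revPerm) (∏ i : Fin n, X i ^ (n - 1 - (i : ℕ)))
  | step (w : Equiv.Perm (Fin n)) (i j : Fin n) (hij : (i : ℕ) + 1 = (j : ℕ))
      (hasc : w i < w j) (f : MvPolynomial (Fin n) ℤ)
      (hf : IsGroth n (w * Equiv.swap i j) f) :
      IsGroth n w (isobaric n i j f)

/-! ### Auxiliary lemmas on the divided difference operator -/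

section DdiffLemmas

lemma dvd_sub_rename_swap (n : ℕ) (i j : Fin n) (f : MvPolynomial (Fin n) ℤ) :
    (X i - X j : MvPolynomial (Fin n) ℤ) ∣ (f - rename (Equiv.swap i j) f) := by
  induction f using MvPolynomial.induction_on with
  | C a => simp
  | add p q hp hq =>
      have : p + q - rename (Equiv.swap i j) (p + q)
          = (p - rename (Equiv.swap i j) p) + (q - rename (Equiv.swap i j) q) := by
        rw [map_add]; ring
      rw [this]; exact dvd_add hp hq
  | mul_X p k hp =>
      have : p * X k - rename (Equiv.swap i j) (p * X k)
          = (p - rename (Equiv.swap i j) p) * X k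
            + rename (Equiv.swap i j) p * (X k - X (Equiv.swap i j k)) := by
        rw [map_mul, rename_X]; ring
      rw [this]
      refine dvd_add (Dvd.dvd.mul_right hp _) (Dvd.dvd.mul_left ?_ _)
      rcases eq_or_ne k i with rfl | hki
      · rw [Equiv.swap_apply_left]
      rcases eq_or_ne k j with rfl | hkj
      · rw [Equiv.swap_apply_right, show (X k - X i : MvPolynomial (Fin n) ℤ) = -(X i - X k) by ring]
        exact dvd_neg.mpr dvd_rfl
      · rw [Equiv.swap_apply_of_ne_of_ne hki hkj]; simp

lemma ddiff_spec (n : ℕ) (i j : Fin n) (f : MvPolynomial (Fin n) ℤ) :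
    (X i - X j : MvPolynomial (Fin n) ℤ) * ddiff n i j f
      = f - rename (Equiv.swap i j) f := by
  rw [ddiff, dif_pos (dvd_sub_rename_swap n i j f)]
  exact ((dvd_sub_rename_swap n i j f).choose_spec).symm

lemma X_sub_X_ne (n : ℕ) {i j : Fin n} (hij : i ≠ j) :
    (X i - X j : MvPolynomial (Fin n) ℤ) ≠ 0 :=
  sub_ne_zero.mpr (fun h => hij (MvPolynomial.X_injective h))

lemma ddiff_eq_of (n : ℕ) {i j : Fin n} (hij : i ≠ j) {f g : MvPolynomial (Fin n) ℤ}
    (h : (X i - X j : MvPolynomial (Fin n) ℤ) * g = f - rename (Equiv.swap i j) f) :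
    ddiff n i j f = g :=
  mul_left_cancel₀ (X_sub_X_ne n hij) ((ddiff_spec n i j f).trans h.symm)

lemma rename_rename_swap (n : ℕ) (i j : Fin n) (f : MvPolynomial (Fin n) ℤ) :
    rename (Equiv.swap i j) (rename (Equiv.swap i j) f) = f := by
  rw [rename_rename]
  have : (Equiv.swap i j : Fin n → Fin n) ∘ (Equiv.swap i j) = id := by
    funext a; simp
  rw [this, rename_id, AlgHom.id_apply]

lemma rename_swap_ddiff (n : ℕ) {i j : Fin n} (hij : i ≠ j) (f : MvPolynomial (Fin n) ℤ) :
    rename (Equiv.swap i j) (ddiff n i j f) = ddiff n i j f := by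
  have h := congrArg (rename (Equiv.swap i j)) (ddiff_spec n i j f)
  rw [map_mul, map_sub, map_sub, rename_X, rename_X, Equiv.swap_apply_left,
    Equiv.swap_apply_right, rename_rename_swap] at h
  have h2 : (X i - X j : MvPolynomial (Fin n) ℤ) * rename (Equiv.swap i j) (ddiff n i j f)
      = (X i - X j) * ddiff n i j f := by
    have h3 := ddiff_spec n i j f
    linear_combination -h - h3
  exact mul_left_cancel₀ (X_sub_X_ne n hij) h2

lemma ddiff_of_invariant (n : ℕ) {i j : Fin n} (hij : i ≠ j) {f : MvPolynomial (Fin n) ℤ}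
    (h : rename (Equiv.swap i j) f = f) : ddiff n i j f = 0 := by
  refine ddiff_eq_of n hij ?_
  rw [h]; ring

lemma ddiff_ddiff (n : ℕ) {i j : Fin n} (hij : i ≠ j) (f : MvPolynomial (Fin n) ℤ) :
    ddiff n i j (ddiff n i j f) = 0 :=
  ddiff_of_invariant n hij (rename_swap_ddiff n hij f)

lemma swap_disjoint_comm {α : Type*} [DecidableEq α] {a b c d : α}
    (h1 : a ≠ c) (h2 : a ≠ d) (h3 : b ≠ c) (h4 : b ≠ d) :
    Equiv.swap a b * Equiv.swap c d = Equiv.swap c d * Equiv.swap a b := by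
  ext x
  simp only [Equiv.Perm.mul_apply, Equiv.swap_apply_def]
  split_ifs <;> simp_all

lemma swap_braid {α : Type*} [DecidableEq α] {a b c : α}
    (hab : a ≠ b) (hbc : b ≠ c) (hac : a ≠ c) :
    Equiv.swap a b * Equiv.swap b c * Equiv.swap a b
      = Equiv.swap b c * Equiv.swap a b * Equiv.swap b c := by
  have h1 : Equiv.swap b a * Equiv.swap c b * Equiv.swap b a = Equiv.swap a c :=
    Equiv.swap_mul_swap_mul_swap hbc.symm hac.symm
  have h2 : Equiv.swap b c * Equiv.swap a b * Equiv.swap b c = Equiv.swap c a :=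
    Equiv.swap_mul_swap_mul_swap hab hac
  rw [Equiv.swap_comm b a, Equiv.swap_comm c b] at h1
  rw [h2, h1, Equiv.swap_comm]

lemma ddiff_comm (n : ℕ) {i j k l : Fin n} (hij : i ≠ j) (hkl : k ≠ l)
    (h1 : i ≠ k) (h2 : i ≠ l) (h3 : j ≠ k) (h4 : j ≠ l) (f : MvPolynomial (Fin n) ℤ) :
    ddiff n i j (ddiff n k l f) = ddiff n k l (ddiff n i j f) := by
  set s : Equiv.Perm (Fin n) := Equiv.swap i j with hs
  set t : Equiv.Perm (Fin n) := Equiv.swap k l with ht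
  have k1 : (X k - X l : MvPolynomial (Fin n) ℤ) * ((X i - X j) * ddiff n i j (ddiff n k l f))
      = f - rename t f - rename s f + rename s (rename t f) := by
    rw [ddiff_spec]
    have e1 := ddiff_spec n k l f
    have e2 := congrArg (rename (Equiv.swap i j)) e1
    rw [map_mul, map_sub, map_sub, rename_X, rename_X,
      Equiv.swap_apply_of_ne_of_ne (Ne.symm h1) (Ne.symm h3),
      Equiv.swap_apply_of_ne_of_ne (Ne.symm h2) (Ne.symm h4)] at e2
    rw [mul_sub]
    rw [← hs, ← ht] at *
    linear_combination e1 - e2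
  have k2 : (X i - X j : MvPolynomial (Fin n) ℤ) * ((X k - X l) * ddiff n k l (ddiff n i j f))
      = f - rename s f - rename t f + rename t (rename s f) := by
    rw [ddiff_spec]
    have e1 := ddiff_spec n i j f
    have e2 := congrArg (rename (Equiv.swap k l)) e1
    rw [map_mul, map_sub, map_sub, rename_X, rename_X,
      Equiv.swap_apply_of_ne_of_ne h1 h2,
      Equiv.swap_apply_of_ne_of_ne h3 h4] at e2
    rw [mul_sub]
    rw [← hs, ← ht] at *
    linear_combination e1 - e2
  have hco : Equiv.swap i j * Equiv.swap k l = Equiv.swap k l * Equiv.swap i j :=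
    swap_disjoint_comm h1 h2 h3 h4
  have hst : rename (⇑s) (rename (⇑t) f) = rename (⇑t) (rename (⇑s) f) := by
    rw [rename_rename, rename_rename]
    have hfun : (⇑s ∘ ⇑t : Fin n → Fin n) = (⇑t ∘ ⇑s) := by
      funext x
      have := congrArg (fun e : Equiv.Perm (Fin n) => e x) hco
      simpa [Equiv.Perm.mul_apply, hs, ht] using this
    rw [hfun]
  have : (X k - X l : MvPolynomial (Fin n) ℤ) * ((X i - X j) * ddiff n i j (ddiff n k l f))
      = (X k - X l) * ((X i - X j) * ddiff n k l (ddiff n i j f)) := by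
    rw [k1]
    linear_combination -k2 + hst
  have h5 := mul_left_cancel₀ (X_sub_X_ne n hkl) this
  exact mul_left_cancel₀ (X_sub_X_ne n hij) h5

lemma ddiff_neg (n : ℕ) {i j : Fin n} (hij : i ≠ j) (g : MvPolynomial (Fin n) ℤ) :
    ddiff n i j (-g) = -ddiff n i j g := by
  refine ddiff_eq_of n hij ?_
  rw [map_neg]
  have := ddiff_spec n i j g
  linear_combination -this

lemma ddiff_rev (n : ℕ) {i j : Fin n} (hij : i ≠ j) (g : MvPolynomial (Fin n) ℤ) :
    ddiff n j i g = -ddiff n i j g := by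
  refine ddiff_eq_of n hij.symm ?_
  rw [Equiv.swap_comm]
  have := ddiff_spec n i j g
  linear_combination this

lemma ddiff_braid_key (n : ℕ) {a b c : Fin n} (hab : a ≠ b) (hbc : b ≠ c) (hac : a ≠ c)
    (h : MvPolynomial (Fin n) ℤ) :
    (X a - X b) * ((X b - X c) * ((X a - X c) *
        ddiff n a b (ddiff n b c (ddiff n a b h))))
      = h - rename (Equiv.swap a b) h - rename (Equiv.swap b c) h
        + rename (Equiv.swap b c) (rename (Equiv.swap a b) h)
        + rename (Equiv.swap a b) (rename (Equiv.swap b c) h)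
        - rename (Equiv.swap a b) (rename (Equiv.swap b c) (rename (Equiv.swap a b) h)) := by
  set p1 := ddiff n a b h with hp1def
  set p2 := ddiff n b c p1 with hp2def
  have e1 : (X a - X b : MvPolynomial (Fin n) ℤ) * p1 = h - rename (Equiv.swap a b) h :=
    ddiff_spec n a b h
  have hp1 : rename (Equiv.swap a b) p1 = p1 := rename_swap_ddiff n hab h
  have e2 : (X b - X c : MvPolynomial (Fin n) ℤ) * p2 = p1 - rename (Equiv.swap b c) p1 :=
    ddiff_spec n b c p1
  have e3 : (X a - X b : MvPolynomial (Fin n) ℤ) * ddiff n a b p2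
      = p2 - rename (Equiv.swap a b) p2 := ddiff_spec n a b p2
  have e4 := congrArg (rename (Equiv.swap a b)) e2
  simp only [map_mul, map_sub, rename_X, Equiv.swap_apply_right,
    Equiv.swap_apply_of_ne_of_ne (Ne.symm hac) (Ne.symm hbc), hp1] at e4
  have e5 := congrArg (rename (Equiv.swap b c)) e1
  simp only [map_mul, map_sub, rename_X,
    Equiv.swap_apply_of_ne_of_ne hab hac, Equiv.swap_apply_left] at e5
  have e6 := congrArg (rename (Equiv.swap a b)) e5
  simp only [map_mul, map_sub, rename_X, Equiv.swap_apply_left,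
    Equiv.swap_apply_of_ne_of_ne (Ne.symm hac) (Ne.symm hbc)] at e6
  linear_combination (X b - X c) * (X a - X c) * e3 + (X a - X c) * e2
    - (X b - X c) * e4 + e1 - e5 + e6

lemma ddiff_braid (n : ℕ) {a b c : Fin n} (hab : a ≠ b) (hbc : b ≠ c) (hac : a ≠ c)
    (h : MvPolynomial (Fin n) ℤ) :
    ddiff n a b (ddiff n b c (ddiff n a b h))
      = ddiff n b c (ddiff n a b (ddiff n b c h)) := by
  have K1 := ddiff_braid_key n hab hbc hac h
  have K2 := ddiff_braid_key n (c := a) (a := c) hbc.symm hab.symm hac.symm h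
  rw [Equiv.swap_comm c b, Equiv.swap_comm b a] at K2
  simp only [ddiff_rev n hbc, ddiff_rev n hab, ddiff_neg n hbc, ddiff_neg n hab,
    neg_neg, mul_neg, neg_mul] at K2
  have hperm : Equiv.swap a b * Equiv.swap b c * Equiv.swap a b
      = Equiv.swap b c * Equiv.swap a b * Equiv.swap b c := swap_braid hab hbc hac
  have hsts : rename (Equiv.swap a b) (rename (Equiv.swap b c) (rename (Equiv.swap a b) h))
      = rename (Equiv.swap b c) (rename (Equiv.swap a b) (rename (Equiv.swap b c) h)) := by
    rw [rename_rename, rename_rename, rename_rename, rename_rename]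
    have hfun : (⇑(Equiv.swap a b) ∘ ⇑(Equiv.swap b c) ∘ ⇑(Equiv.swap a b) : Fin n → Fin n)
        = ⇑(Equiv.swap b c) ∘ ⇑(Equiv.swap a b) ∘ ⇑(Equiv.swap b c) := by
      funext x
      have := congrArg (fun e : Equiv.Perm (Fin n) => e x) hperm
      simpa [Equiv.Perm.mul_apply] using this
    simp only [Function.comp_assoc]
    rw [hfun]
  have key : (X a - X b : MvPolynomial (Fin n) ℤ) * ((X b - X c) * ((X a - X c) *
        ddiff n a b (ddiff n b c (ddiff n a b h))))
      = (X a - X b) * ((X b - X c) * ((X a - X c) *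
        ddiff n b c (ddiff n a b (ddiff n b c h)))) := by
    linear_combination K1 - K2 - hsts
  exact mul_left_cancel₀ (X_sub_X_ne n hac)
    (mul_left_cancel₀ (X_sub_X_ne n hbc) (mul_left_cancel₀ (X_sub_X_ne n hab) key))

end DdiffLemmas

/-! ### Counting non-inversions -/

section Mu

noncomputable def muSet (n : ℕ) (w : Equiv.Perm (Fin n)) : Finset (Fin n × Fin n) :=
  Finset.univ.filter (fun p => p.1 < p.2 ∧ w p.1 < w p.2)

noncomputable def mu (n : ℕ) (w : Equiv.Perm (Fin n)) : ℕ := (muSet n w).card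

lemma swap_lt_of {n : ℕ} {i j a b : Fin n} (hij : (i:ℕ)+1 = (j:ℕ)) (hab : a < b)
    (hne : ¬(a = i ∧ b = j)) : Equiv.swap i j a < Equiv.swap i j b := by
  have vne : ∀ {x y : Fin n}, x ≠ y → (x:ℕ) ≠ (y:ℕ) := fun h hh => h (Fin.val_injective hh)
  rw [Fin.lt_def] at hab
  by_cases hai : a = i
  · subst hai
    have hbj : b ≠ j := fun hh => hne ⟨rfl, hh⟩
    have hbi : b ≠ a := by
      intro hh; rw [hh] at hab; omega
    rw [Equiv.swap_apply_left, Equiv.swap_apply_of_ne_of_ne hbi hbj, Fin.lt_def]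
    have := vne hbj
    omega
  by_cases haj : a = j
  · subst haj
    have hbi : b ≠ i := by
      intro hh; rw [hh] at hab; omega
    have hbj : b ≠ a := by
      intro hh; rw [hh] at hab; omega
    rw [Equiv.swap_apply_right, Equiv.swap_apply_of_ne_of_ne hbi hbj, Fin.lt_def]
    omega
  rw [Equiv.swap_apply_of_ne_of_ne hai haj]
  by_cases hbi : b = i
  · subst hbi
    rw [Equiv.swap_apply_left, Fin.lt_def]
    omega
  by_cases hbj : b = j
  · subst hbj
    rw [Equiv.swap_apply_right, Fin.lt_def]
    have := vne hai
    omega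
  · rw [Equiv.swap_apply_of_ne_of_ne hbi hbj, Fin.lt_def]
    omega

lemma mu_step (n : ℕ) (w : Equiv.Perm (Fin n)) {i j : Fin n}
    (hij : (i:ℕ)+1 = (j:ℕ)) (hasc : w i < w j) :
    mu n (w * Equiv.swap i j) + 1 = mu n w := by
  have hijlt : i < j := by rw [Fin.lt_def]; omega
  have hmem : (i, j) ∈ muSet n w := by
    simp [muSet, hijlt, hasc]
  have hcard : (muSet n (w * Equiv.swap i j)).card = ((muSet n w).erase (i, j)).card := by
    refine Finset.card_bij' (fun p _ => (Equiv.swap i j p.1, Equiv.swap i j p.2))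
      (fun q _ => (Equiv.swap i j q.1, Equiv.swap i j q.2)) ?_ ?_ ?_ ?_
    · rintro ⟨a, b⟩ ha
      simp only [muSet, Finset.mem_filter, Finset.mem_univ, true_and] at ha
      simp only [Equiv.Perm.mul_apply] at ha
      have hne : ¬(a = i ∧ b = j) := by
        rintro ⟨rfl, rfl⟩
        rw [Equiv.swap_apply_left, Equiv.swap_apply_right] at ha
        exact absurd ha.2 (not_lt.mpr (le_of_lt hasc))
      refine Finset.mem_erase.mpr ⟨?_, ?_⟩
      · intro hc
        have hc' : (Equiv.swap i j a, Equiv.swap i j b) = (i, j) := hc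
        have e1 : Equiv.swap i j a = i := congrArg Prod.fst hc'
        have e2 : Equiv.swap i j b = j := congrArg Prod.snd hc'
        have ha' : a = j := by
          have := congrArg (Equiv.swap i j) e1
          simpa [Equiv.swap_apply_self] using this
        have hb' : b = i := by
          have := congrArg (Equiv.swap i j) e2
          simpa [Equiv.swap_apply_self] using this
        have : j < i := by rw [← ha', ← hb']; exact ha.1
        exact absurd this (not_lt.mpr (le_of_lt hijlt))
      · simp only [muSet, Finset.mem_filter, Finset.mem_univ, true_and]
        exact ⟨swap_lt_of hij ha.1 hne, ha.2⟩
    · rintro ⟨a, b⟩ ha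
      rw [Finset.mem_erase] at ha
      obtain ⟨hne0, ha⟩ := ha
      simp only [muSet, Finset.mem_filter, Finset.mem_univ, true_and] at ha
      have hne : ¬(a = i ∧ b = j) := by
        rintro ⟨rfl, rfl⟩; exact hne0 rfl
      simp only [muSet, Finset.mem_filter, Finset.mem_univ, true_and]
      simp only [Equiv.Perm.mul_apply, Equiv.swap_apply_self]
      exact ⟨swap_lt_of hij ha.1 hne, ha.2⟩
    · rintro ⟨a, b⟩ _; simp
    · rintro ⟨a, b⟩ _; simp
  have hpos : 0 < (muSet n w).card := Finset.card_pos.mpr ⟨_, hmem⟩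
  rw [Finset.card_erase_of_mem hmem] at hcard
  unfold mu
  omega

set_option synthInstance.maxHeartbeats 1000000 in
lemma no_ascent_eq_revPerm {n : ℕ} {w : Equiv.Perm (Fin n)}
    (h : ∀ i j : Fin n, (i:ℕ)+1 = (j:ℕ) → ¬ w i < w j) : w = Fin.revPerm := by
  have hdesc : ∀ i j : Fin n, (i:ℕ)+1 = (j:ℕ) → w j < w i := by
    intro i j hij
    have hne : w i ≠ w j := by
      intro he
      have : i = j := w.injective he
      rw [this] at hij; omega
    exact lt_of_le_of_ne (not_lt.mp (h i j hij)) (Ne.symm hne)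
  have key : ∀ k : ℕ, ∀ a b : Fin n, (b:ℕ) = (a:ℕ) + k + 1 → w b < w a := by
    intro k
    induction k with
    | zero => intro a b hb; exact hdesc a b (by omega)
    | succ m ih =>
        intro a b hb
        have hc : (a:ℕ) + m + 1 < n := by have := b.isLt; omega
        have hcv : ((⟨(a:ℕ) + m + 1, hc⟩ : Fin n) : ℕ) = (a:ℕ) + m + 1 := rfl
        exact lt_trans (hdesc _ b (by rw [hcv]; omega)) (ih a _ (by rw [hcv]))
  have hanti : ∀ a b : Fin n, a < b → w b < w a := by
    intro a b hab
    rw [Fin.lt_def] at hab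
    exact key ((b:ℕ) - (a:ℕ) - 1) a b (by omega)
  have hmono : StrictMono (fun x : Fin n => w x.rev) := by
    intro x y hxy
    exact hanti y.rev x.rev (by rwa [Fin.rev_lt_rev])
  have hsurj : Function.Surjective (fun x : Fin n => w x.rev) := by
    intro y
    exact ⟨(w.symm y).rev, by simp [Fin.rev_rev]⟩
  have hrange : Set.range (fun x : Fin n => w x.rev) = Set.range (id : Fin n → Fin n) := by
    rw [hsurj.range_eq, Set.range_id]
  haveI : WellFoundedLT (Fin n) := inferInstance
  have hid : (fun x : Fin n => w x.rev) = id := (hmono.range_inj strictMono_id).mp hrange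
  ext x
  have := congrFun hid x.rev
  simp only [Fin.rev_rev, id_eq] at this
  simp [this]

lemma exists_ascent {n : ℕ} {w : Equiv.Perm (Fin n)} (hw : w ≠ Fin.revPerm) :
    ∃ i j : Fin n, (i:ℕ)+1 = (j:ℕ) ∧ w i < w j := by
  by_contra hcon
  push_neg at hcon
  exact hw (no_ascent_eq_revPerm (fun i j hij => not_lt.mpr (hcon i j hij)))

lemma revPerm_no_ascent {n : ℕ} {i j : Fin n} (hij : (i:ℕ)+1 = (j:ℕ)) :
    ¬ (Fin.revPerm i : Fin n) < Fin.revPerm j := by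
  simp only [Fin.revPerm_apply, not_lt]
  exact le_of_lt (by rw [Fin.rev_lt_rev, Fin.lt_def]; omega)

end Mu

/-! ### Existence and uniqueness of Schubert polynomials -/

lemma schubert_exists (n : ℕ) (w : Equiv.Perm (Fin n)) : ∃ S, IsSchubert n w S := by
  suffices H : ∀ k (w : Equiv.Perm (Fin n)), mu n w = k → ∃ S, IsSchubert n w S from
    H (mu n w) w rfl
  intro k
  induction k using Nat.strong_induction_on with
  | _ k IH =>
    intro w hk
    by_cases hw : w = Fin.revPerm
    · subst hw; exact ⟨_, IsSchubert.w0⟩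
    · obtain ⟨i, j, hij, hasc⟩ := exists_ascent hw
      have hmu := mu_step n w hij hasc
      obtain ⟨f, hf⟩ := IH (mu n (w * Equiv.swap i j)) (by omega) _ rfl
      exact ⟨_, IsSchubert.step w i j hij hasc f hf⟩

lemma step_eq (n : ℕ) (w : Equiv.Perm (Fin n)) {i1 j1 i2 j2 : Fin n}
    (h1 : (i1:ℕ) + 1 = (j1:ℕ)) (h2 : (i2:ℕ) + 1 = (j2:ℕ)) (hlt : (i1:ℕ) < (i2:ℕ))
    (asc1 : w i1 < w j1) (asc2 : w i2 < w j2)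
    {f g : MvPolynomial (Fin n) ℤ}
    (hf : IsSchubert n (w * Equiv.swap i1 j1) f)
    (hg : IsSchubert n (w * Equiv.swap i2 j2) g)
    (uniq1 : ∀ S T, IsSchubert n (w * Equiv.swap i1 j1) S →
      IsSchubert n (w * Equiv.swap i1 j1) T → S = T)
    (uniq2 : ∀ S T, IsSchubert n (w * Equiv.swap i2 j2) S →
      IsSchubert n (w * Equiv.swap i2 j2) T → S = T) :
    ddiff n i1 j1 f = ddiff n i2 j2 g := by
  have vne : ∀ {x y : Fin n}, (x:ℕ) ≠ (y:ℕ) → x ≠ y := fun h e => h (congrArg Fin.val e)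
  by_cases hadj : (j1:ℕ) = (i2:ℕ)
  · -- braid case : i1 < j1 = i2 < j2
    have hj1i2 : j1 = i2 := Fin.val_injective hadj
    subst hj1i2
    have hab : i1 ≠ j1 := vne (by omega)
    have hbc : j1 ≠ j2 := vne (by omega)
    have hac : i1 ≠ j2 := vne (by omega)
    obtain ⟨h, hh⟩ := schubert_exists n (w * Equiv.swap i1 j1 * Equiv.swap j1 j2 * Equiv.swap i1 j1)
    -- chain identifying f
    have hA1 : IsSchubert n (w * Equiv.swap i1 j1 * Equiv.swap j1 j2) (ddiff n i1 j1 h) := by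
      refine IsSchubert.step _ i1 j1 h1 ?_ h hh
      have c1 : (w * Equiv.swap i1 j1 * Equiv.swap j1 j2) i1 = w j1 := by
        simp only [Equiv.Perm.mul_apply]
        rw [Equiv.swap_apply_of_ne_of_ne hab hac, Equiv.swap_apply_left]
      have c2 : (w * Equiv.swap i1 j1 * Equiv.swap j1 j2) j1 = w j2 := by
        simp only [Equiv.Perm.mul_apply]
        rw [Equiv.swap_apply_left, Equiv.swap_apply_of_ne_of_ne hac.symm hbc.symm]
      rw [c1, c2]; exact asc2
    have hA2 : IsSchubert n (w * Equiv.swap i1 j1) (ddiff n j1 j2 (ddiff n i1 j1 h)) := by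
      refine IsSchubert.step _ j1 j2 h2 ?_ _ hA1
      have c1 : (w * Equiv.swap i1 j1) j1 = w i1 := by
        simp only [Equiv.Perm.mul_apply]
        rw [Equiv.swap_apply_right]
      have c2 : (w * Equiv.swap i1 j1) j2 = w j2 := by
        simp only [Equiv.Perm.mul_apply]
        rw [Equiv.swap_apply_of_ne_of_ne hac.symm hbc.symm]
      rw [c1, c2]; exact lt_trans asc1 asc2
    have hf2 : f = ddiff n j1 j2 (ddiff n i1 j1 h) := uniq1 _ _ hf hA2
    -- chain identifying g
    have hbraid := swap_braid hab hbc hac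
    have hh' : IsSchubert n (w * Equiv.swap j1 j2 * Equiv.swap i1 j1 * Equiv.swap j1 j2) h := by
      have heq : w * Equiv.swap j1 j2 * Equiv.swap i1 j1 * Equiv.swap j1 j2
          = w * Equiv.swap i1 j1 * Equiv.swap j1 j2 * Equiv.swap i1 j1 := by
        simp only [mul_assoc] at hbraid ⊢
        rw [← hbraid]
      rw [heq]; exact hh
    have hB1 : IsSchubert n (w * Equiv.swap j1 j2 * Equiv.swap i1 j1) (ddiff n j1 j2 h) := by
      refine IsSchubert.step _ j1 j2 h2 ?_ h hh'
      have c1 : (w * Equiv.swap j1 j2 * Equiv.swap i1 j1) j1 = w i1 := by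
        simp only [Equiv.Perm.mul_apply]
        rw [Equiv.swap_apply_right, Equiv.swap_apply_of_ne_of_ne hab hac]
      have c2 : (w * Equiv.swap j1 j2 * Equiv.swap i1 j1) j2 = w j1 := by
        simp only [Equiv.Perm.mul_apply]
        rw [Equiv.swap_apply_of_ne_of_ne hac.symm hbc.symm, Equiv.swap_apply_right]
      rw [c1, c2]; exact asc1
    have hB2 : IsSchubert n (w * Equiv.swap j1 j2) (ddiff n i1 j1 (ddiff n j1 j2 h)) := by
      refine IsSchubert.step _ i1 j1 h1 ?_ _ hB1
      have c1 : (w * Equiv.swap j1 j2) i1 = w i1 := by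
        simp only [Equiv.Perm.mul_apply]
        rw [Equiv.swap_apply_of_ne_of_ne hab hac]
      have c2 : (w * Equiv.swap j1 j2) j1 = w j2 := by
        simp only [Equiv.Perm.mul_apply]
        rw [Equiv.swap_apply_left]
      rw [c1, c2]; exact lt_trans asc1 asc2
    have hg2 : g = ddiff n i1 j1 (ddiff n j1 j2 h) := uniq2 _ _ hg hB2
    rw [hf2, hg2]
    exact ddiff_braid n hab hbc hac h
  · -- disjoint case : i1 < j1 < i2 < j2
    have d1 : i1 ≠ i2 := vne (by omega)
    have d2 : i1 ≠ j2 := vne (by omega)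
    have d3 : j1 ≠ i2 := vne (by omega)
    have d4 : j1 ≠ j2 := vne (by omega)
    have d5 : i1 ≠ j1 := vne (by omega)
    have d6 : i2 ≠ j2 := vne (by omega)
    obtain ⟨h, hh⟩ := schubert_exists n (w * Equiv.swap i1 j1 * Equiv.swap i2 j2)
    have hA : IsSchubert n (w * Equiv.swap i1 j1) (ddiff n i2 j2 h) := by
      refine IsSchubert.step _ i2 j2 h2 ?_ h hh
      have c1 : (w * Equiv.swap i1 j1) i2 = w i2 := by
        simp only [Equiv.Perm.mul_apply]
        rw [Equiv.swap_apply_of_ne_of_ne d1.symm d3.symm]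
      have c2 : (w * Equiv.swap i1 j1) j2 = w j2 := by
        simp only [Equiv.Perm.mul_apply]
        rw [Equiv.swap_apply_of_ne_of_ne d2.symm d4.symm]
      rw [c1, c2]; exact asc2
    have hf2 : f = ddiff n i2 j2 h := uniq1 _ _ hf hA
    have hh' : IsSchubert n (w * Equiv.swap i2 j2 * Equiv.swap i1 j1) h := by
      have heq : w * Equiv.swap i2 j2 * Equiv.swap i1 j1
          = w * Equiv.swap i1 j1 * Equiv.swap i2 j2 := by
        simp only [mul_assoc]
        rw [swap_disjoint_comm d1.symm d3.symm d2.symm d4.symm]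
      rw [heq]; exact hh
    have hB : IsSchubert n (w * Equiv.swap i2 j2) (ddiff n i1 j1 h) := by
      refine IsSchubert.step _ i1 j1 h1 ?_ h hh'
      have c1 : (w * Equiv.swap i2 j2) i1 = w i1 := by
        simp only [Equiv.Perm.mul_apply]
        rw [Equiv.swap_apply_of_ne_of_ne d1 d2]
      have c2 : (w * Equiv.swap i2 j2) j1 = w j1 := by
        simp only [Equiv.Perm.mul_apply]
        rw [Equiv.swap_apply_of_ne_of_ne d3 d4]
      rw [c1, c2]; exact asc1
    have hg2 : g = ddiff n i1 j1 h := uniq2 _ _ hg hB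
    rw [hf2, hg2]
    exact ddiff_comm n d5 d6 d1 d2 d3 d4 h

lemma schubert_unique (n : ℕ) (w : Equiv.Perm (Fin n)) {S T : MvPolynomial (Fin n) ℤ}
    (hS : IsSchubert n w S) (hT : IsSchubert n w T) : S = T := by
  suffices H : ∀ k (w : Equiv.Perm (Fin n)) (S T : MvPolynomial (Fin n) ℤ),
      mu n w = k → IsSchubert n w S → IsSchubert n w T → S = T from
    H (mu n w) w S T rfl hS hT
  intro k
  induction k using Nat.strong_induction_on with
  | _ k IH =>
    intro w S T hk hS hT
    cases hS with
    | w0 =>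
        cases hT with
        | w0 => rfl
        | step w' i j hij hasc f hf => exact absurd hasc (revPerm_no_ascent hij)
    | step w i1 j1 h1 asc1 f hf =>
        cases hT with
        | w0 => exact absurd asc1 (revPerm_no_ascent h1)
        | step w' i2 j2 h2 asc2 g hg =>
            have hmu1 := mu_step n w h1 asc1
            have hmu2 := mu_step n w h2 asc2
            have uniq1 : ∀ S T, IsSchubert n (w * Equiv.swap i1 j1) S →
                IsSchubert n (w * Equiv.swap i1 j1) T → S = T :=
              fun S T hS hT => IH (mu n (w * Equiv.swap i1 j1)) (by omega) _ S T rfl hS hT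
            have uniq2 : ∀ S T, IsSchubert n (w * Equiv.swap i2 j2) S →
                IsSchubert n (w * Equiv.swap i2 j2) T → S = T :=
              fun S T hS hT => IH (mu n (w * Equiv.swap i2 j2)) (by omega) _ S T rfl hS hT
            rcases lt_trichotomy (i1:ℕ) (i2:ℕ) with hlt | heq | hgt
            · exact step_eq n w h1 h2 hlt asc1 asc2 hf hg uniq1 uniq2
            · have hi : i1 = i2 := Fin.val_injective heq
              subst hi
              have hj : j1 = j2 := Fin.val_injective (by omega)
              subst hj
              rw [uniq1 f g hf hg]
            · exact (step_eq n w h2 h1 hgt asc2 asc1 hg hf uniq2 uniq1).symm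

/-- for w ∈ S_n and any index i: if w(i) > w(i+1) then
∂_i(𝔖_w) = 𝔖_{w s_i}, and if w(i) < w(i+1) then ∂_i(𝔖_w) = 0. -/
theorem ddiff_schubert (n : ℕ) (w : Equiv.Perm (Fin n)) (i j : Fin n)
    (hij : (i : ℕ) + 1 = (j : ℕ)) (S S' : MvPolynomial (Fin n) ℤ)
    (hS : IsSchubert n w S) (hS' : IsSchubert n (w * Equiv.swap i j) S') :
    (w j < w i → ddiff n i j S = S') ∧ (w i < w j → ddiff n i j S = 0) := by
  have hne : i ≠ j := fun e => by rw [e] at hij; omega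
  constructor
  · intro hdesc
    have hasc : (w * Equiv.swap i j) i < (w * Equiv.swap i j) j := by
      simp only [Equiv.Perm.mul_apply, Equiv.swap_apply_left, Equiv.swap_apply_right]
      exact hdesc
    have hstep : IsSchubert n (w * Equiv.swap i j) (ddiff n i j S) := by
      refine IsSchubert.step _ i j hij hasc S ?_
      rw [mul_assoc, Equiv.swap_mul_self, mul_one]
      exact hS
    exact schubert_unique n _ hstep hS'
  · intro hasc
    have hstep : IsSchubert n w (ddiff n i j S') := IsSchubert.step w i j hij hasc S' hS'
    have hSe : S = ddiff n i j S' := schubert_unique n _ hS hstep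
    rw [hSe, ddiff_ddiff n hne]
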